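/- Let K be a field of characteristic zero and let P : K^n → K be a bisymmetric polynomial function of degree p ≥ 2 whose homogeneous component of degree p is the monomial P_p(x) = c·x^γ with c ≠ 0 and |γ| = p. Suppose P ≠ P_p, let q < p be the degree of P − P_p and let P_q be the homogeneous component of degree q of P. Then for every n×n matrix X = (x_{ij}) over K with rows r_1,…,r_n and columns c_1,…,c_n, Σ_{i=1}^n P_q(r_i)·(∂_{x_i} P_p)(P_p(r_1),…,P_p(r_n)) = Σ_{i=1}^n P_q(c_i)·(∂_{x_i} P_p)(P_p(c_1),…,P_p(c_n)). -/

import Mathlib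

section BisymHelpers

open Polynomial Finset

variable {K : Type*} [CommRing K]

/-- Shape of a polynomial: coefficients vanish above `h` except `A` at `h`,
vanish strictly between `h - g` and `h`, with value `S` at `h - g`. -/
def ShapeP (g h : ℕ) (A S : K) (Q : Polynomial K) : Prop :=
  (∀ d, h < d → Q.coeff d = 0) ∧
  Q.coeff h = A ∧
  (∀ d, h - g < d → d < h → Q.coeff d = 0) ∧
  (h ≠ 0 → Q.coeff (h - g) = S) ∧
  (h = 0 → Q = 1 ∧ S = 0) ∧
  (h ≠ 0 → g ≤ h)

lemma shapeP_one (g : ℕ) : ShapeP g 0 (1 : K) 0 1 := by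
  refine ⟨fun d hd => ?_, by simp, fun d h1 h2 => by omega, by simp, fun _ => ⟨rfl, rfl⟩, by simp⟩
  rw [Polynomial.coeff_one, if_neg (by omega)]

lemma shapeP_mul {g h₁ h₂ : ℕ} {A₁ S₁ A₂ S₂ : K} {Q₁ Q₂ : Polynomial K}
    (hg : 0 < g)
    (H₁ : ShapeP g h₁ A₁ S₁ Q₁) (H₂ : ShapeP g h₂ A₂ S₂ Q₂) :
    ShapeP g (h₁ + h₂) (A₁ * A₂) (S₁ * A₂ + A₁ * S₂) (Q₁ * Q₂) := by
  obtain ⟨u₁, t₁, m₁, s₁, z₁, gle₁⟩ := id H₁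
  obtain ⟨u₂, t₂, m₂, s₂, z₂, gle₂⟩ := id H₂
  rcases eq_or_ne h₁ 0 with rfl | hh₁
  · obtain ⟨rfl, rfl⟩ := z₁ rfl
    have hA₁ : A₁ = 1 := by simpa using t₁.symm
    subst hA₁
    simpa using H₂
  rcases eq_or_ne h₂ 0 with rfl | hh₂
  · obtain ⟨rfl, rfl⟩ := z₂ rfl
    have hA₂ : A₂ = 1 := by simpa using t₂.symm
    subst hA₂
    simpa using H₁
  have hg₁ := gle₁ hh₁
  have hg₂ := gle₂ hh₂
  -- a helper describing vanishing of coefficients of Q₁, Q₂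
  have key : ∀ d, Q₁.coeff d ≠ 0 → d = h₁ ∨ d ≤ h₁ - g := by
    intro d hd
    by_contra hcon
    push_neg at hcon
    rcases lt_trichotomy d h₁ with h | h | h
    · exact hd (m₁ d (by omega) h)
    · exact hcon.1 h
    · exact hd (u₁ d h)
  have key₂ : ∀ d, Q₂.coeff d ≠ 0 → d = h₂ ∨ d ≤ h₂ - g := by
    intro d hd
    by_contra hcon
    push_neg at hcon
    rcases lt_trichotomy d h₂ with h | h | h
    · exact hd (m₂ d (by omega) h)
    · exact hcon.1 h
    · exact hd (u₂ d h)
  refine ⟨?_, ?_, ?_, ?_, ?_, ?_⟩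
  · intro d hd
    rw [Polynomial.coeff_mul]
    refine Finset.sum_eq_zero fun x hx => ?_
    rw [Finset.HasAntidiagonal.mem_antidiagonal] at hx
    by_contra hne
    have h1 := key x.1 (fun h => hne (by simp [h]))
    have h2 := key₂ x.2 (fun h => hne (by simp [h]))
    omega
  · rw [Polynomial.coeff_mul]
    rw [Finset.sum_eq_single ((h₁, h₂) : ℕ × ℕ)]
    · rw [t₁, t₂]
    · intro x hx hne
      rw [Finset.HasAntidiagonal.mem_antidiagonal] at hx
      by_contra hne'
      have h1 := key x.1 (fun h => hne' (by simp [h]))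
      have h2 := key₂ x.2 (fun h => hne' (by simp [h]))
      have : x.1 ≠ h₁ ∨ x.2 ≠ h₂ := by
        rcases eq_or_ne x.1 h₁ with h | h
        · right; intro h'; exact hne (Prod.ext h h')
        · left; exact h
      omega
    · intro h
      simp at h
  · intro d hlo hhi
    rw [Polynomial.coeff_mul]
    refine Finset.sum_eq_zero fun x hx => ?_
    rw [Finset.HasAntidiagonal.mem_antidiagonal] at hx
    by_contra hne
    have h1 := key x.1 (fun h => hne (by simp [h]))
    have h2 := key₂ x.2 (fun h => hne (by simp [h]))
    omega
  · intro _
    rw [Polynomial.coeff_mul]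
    rw [Finset.sum_eq_add_of_mem ((h₁, h₁ + h₂ - g - h₁) : ℕ × ℕ)
        ((h₁ + h₂ - g - h₂, h₂) : ℕ × ℕ)]
    · have e1 : h₁ + h₂ - g - h₁ = h₂ - g := by omega
      have e2 : h₁ + h₂ - g - h₂ = h₁ - g := by omega
      rw [e1, e2, t₁, t₂, s₁ hh₁, s₂ hh₂]
      ring
    · rw [Finset.HasAntidiagonal.mem_antidiagonal]; omega
    · rw [Finset.HasAntidiagonal.mem_antidiagonal]; omega
    · intro h
      have : h₁ = h₁ + h₂ - g - h₂ := congrArg Prod.fst h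
      omega
    · intro x hx hne12
      obtain ⟨hne1, hne2⟩ := hne12
      rw [Finset.HasAntidiagonal.mem_antidiagonal] at hx
      by_contra hne
      have h1 := key x.1 (fun h => hne (by simp [h]))
      have h2 := key₂ x.2 (fun h => hne (by simp [h]))
      -- x.1 = h₁ ∨ x.1 ≤ h₁ - g, similarly x.2 ; x.1 + x.2 = h₁ + h₂ - g
      rcases h1 with h1 | h1 <;> rcases h2 with h2 | h2
      · omega
      · exact hne1 (by apply Prod.ext <;> simp <;> omega)
      · exact hne2 (by apply Prod.ext <;> simp <;> omega)
      · omega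
  · intro h; omega
  · intro _; omega

lemma shapeP_pow {g h : ℕ} {A S : K} {Q : Polynomial K} (hg : 0 < g)
    (H : ShapeP g h A S Q) (e : ℕ) :
    ShapeP g (h * e) (A ^ e) ((e : K) * S * A ^ (e - 1)) (Q ^ e) := by
  induction e with
  | zero => simpa using shapeP_one g
  | succ e ih =>
    have := shapeP_mul hg ih H
    have harith : h * e + h = h * (e + 1) := by ring
    rw [harith] at this
    convert this using 1
    · rw [pow_succ]
    · rcases Nat.eq_zero_or_pos e with rfl | he
      · push_cast; ring_nf
      · have he' : e - 1 + 1 = e := by omega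
        have hA : A ^ (e - 1) * A = A ^ e := by
          rw [← pow_succ, he']
        push_cast [Nat.add_sub_cancel]
        calc (↑e + 1) * S * A ^ e = ↑e * S * (A ^ (e-1) * A) + A ^ e * S := by
              rw [hA]; ring
          _ = ↑e * S * A ^ (e - 1) * A + A ^ e * S := by ring
    · rw [pow_succ]

lemma shapeP_single {p q : ℕ} (hqp : q < p) (u : K) (w : Polynomial K)
    (hw : w.natDegree ≤ q) :
    ShapeP (p - q) p u (w.coeff q) (Polynomial.C u * Polynomial.X ^ p + w) := by
  have hp : 0 < p := by omega
  have hcoeff : ∀ d, (Polynomial.C u * Polynomial.X ^ p + w).coeff d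
      = (if p = d then u else 0) + w.coeff d := by
    intro d
    rw [Polynomial.coeff_add, Polynomial.coeff_C_mul, Polynomial.coeff_X_pow]
    simp [eq_comm]
  have hwz : ∀ d, q < d → w.coeff d = 0 := fun d hd =>
    Polynomial.coeff_eq_zero_of_natDegree_lt (lt_of_le_of_lt hw hd)
  refine ⟨fun d hd => ?_, ?_, fun d h1 h2 => ?_, fun _ => ?_, fun h => absurd h (by omega), fun _ => by omega⟩
  · rw [hcoeff, if_neg (by omega), hwz d (by omega), add_zero]
  · rw [hcoeff, if_pos rfl, hwz p (by omega), add_zero]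
  · rw [hcoeff, if_neg (by omega), hwz d (by omega), add_zero]
  · have : p - (p - q) = q := by omega
    rw [this, hcoeff, if_neg (by omega), zero_add]

lemma shapeP_prod {ι : Type*} [DecidableEq ι] {p q : ℕ} (hqp : q < p)
    (u : ι → K) (w : ι → Polynomial K) (hw : ∀ i, (w i).natDegree ≤ q)
    (γ : ι → ℕ) (s : Finset ι) :
    ShapeP (p - q) (∑ i ∈ s, p * γ i) (∏ i ∈ s, u i ^ γ i)
      (∑ i ∈ s, (γ i : K) * (w i).coeff q * u i ^ (γ i - 1) * ∏ j ∈ s.erase i, u j ^ γ j)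
      (∏ i ∈ s, (Polynomial.C (u i) * Polynomial.X ^ p + w i) ^ γ i) := by
  have hg : 0 < p - q := by omega
  induction s using Finset.induction_on with
  | empty => simpa using shapeP_one (p - q)
  | insert a s ha ih =>
    have H := shapeP_mul hg (shapeP_pow hg (shapeP_single hqp (u a) (w a) (hw a)) (γ a)) ih
    rw [Finset.sum_insert ha, Finset.prod_insert ha, Finset.prod_insert ha,
      Finset.sum_insert ha]
    convert H using 2
    · rw [Finset.erase_insert ha]
    · rw [Finset.mul_sum]
      refine Finset.sum_congr rfl fun i hi => ?_
      have hia : i ≠ a := fun h => ha (h ▸ hi)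
      rw [Finset.erase_insert_of_ne hia.symm, Finset.prod_insert (fun h => ha (Finset.mem_of_mem_erase h))]
      ring

open MvPolynomial

variable {σ : Type*} [Fintype σ]

lemma degree_eq_sum_univ (d : σ →₀ ℕ) : d.degree = ∑ i, d i := by
  rw [show d.degree = ∑ i ∈ d.support, d i from rfl]
  exact Finset.sum_subset (Finset.subset_univ _)
    (fun i _ hi => Finsupp.notMem_support_iff.mp hi)

/-- Coefficient of `t^k` in `P(x₁ t, …, xₙ t)` is the evaluation of the `k`-th
homogeneous component at `x`. -/
lemma coeff_aeval_scale (P : MvPolynomial σ K) (x : σ → K) (k : ℕ) :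
    (MvPolynomial.aeval (fun i => Polynomial.C (x i) * Polynomial.X) P).coeff k
      = MvPolynomial.eval x (MvPolynomial.homogeneousComponent k P) := by
  induction P using MvPolynomial.induction_on' with
  | add p1 p2 ih1 ih2 => simp [ih1, ih2]
  | monomial d a =>
    rw [MvPolynomial.aeval_monomial,
      MvPolynomial.homogeneousComponent_of_mem (MvPolynomial.isHomogeneous_monomial a rfl)]
    have : (d.prod fun i e => (Polynomial.C (x i) * Polynomial.X) ^ e)
        = Polynomial.C (d.prod fun i e => x i ^ e) * Polynomial.X ^ d.degree := by
      rw [Finsupp.prod_pow, Finsupp.prod_pow, degree_eq_sum_univ]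
      simp_rw [mul_pow, ← Polynomial.C_pow]
      rw [Finset.prod_mul_distrib, map_prod, Finset.prod_pow_eq_pow_sum]
    rw [this, Polynomial.algebraMap_eq, ← mul_assoc, ← Polynomial.C_mul,
      Polynomial.coeff_C_mul, Polynomial.coeff_X_pow]
    rcases eq_or_ne k d.degree with rfl | hk
    · rw [if_pos rfl, if_pos rfl, MvPolynomial.eval_monomial, mul_one]
    · rw [if_neg hk, if_neg hk, mul_zero, map_zero]

lemma natDegree_aeval_le (Q : MvPolynomial σ K) (z : σ → Polynomial K) (e : ℕ)
    (hz : ∀ i, (z i).natDegree ≤ e) :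
    (MvPolynomial.aeval z Q).natDegree ≤ Q.totalDegree * e := by
  conv_lhs => rw [MvPolynomial.as_sum Q]
  rw [map_sum]
  refine Polynomial.natDegree_sum_le_of_forall_le _ _ fun d hd => ?_
  rw [MvPolynomial.aeval_monomial]
  refine (Polynomial.natDegree_mul_le).trans ?_
  rw [Polynomial.algebraMap_eq, Polynomial.natDegree_C, zero_add]
  rw [Finsupp.prod]
  refine (Polynomial.natDegree_prod_le _ _).trans ?_
  calc ∑ i ∈ d.support, ((z i) ^ d i).natDegree
      ≤ ∑ i ∈ d.support, d i * e :=
        Finset.sum_le_sum fun i _ =>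
          (Polynomial.natDegree_pow_le).trans (Nat.mul_le_mul_left _ (hz i))
    _ = (∑ i ∈ d.support, d i) * e := by rw [Finset.sum_mul]
    _ ≤ Q.totalDegree * e := Nat.mul_le_mul_right _ (MvPolynomial.le_totalDegree hd)

lemma eval_aeval_poly (P : MvPolynomial σ K) (y : σ → Polynomial K) (t : K) :
    (MvPolynomial.aeval y P).eval t = MvPolynomial.eval (fun i => (y i).eval t) P := by
  rw [MvPolynomial.aeval_def, ← Polynomial.coe_evalRingHom,
    MvPolynomial.eval₂_comp_left (Polynomial.evalRingHom t) (algebraMap K (Polynomial K)) y P]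
  have h1 : (Polynomial.evalRingHom t).comp (algebraMap K (Polynomial K)) = RingHom.id K := by
    ext a
    simp
  rw [h1]
  rfl

section Main

variable {F : Type*} [Field F]

set_option maxHeartbeats 1000000 in
lemma key_coeff {n p q : ℕ} (P : MvPolynomial (Fin n) F)
    (hdeg : P.totalDegree = p) (hp : 2 ≤ p)
    (c : F) (γ : Fin n →₀ ℕ) (hγ : ∑ i, γ i = p)
    (hPp : MvPolynomial.homogeneousComponent p P = MvPolynomial.monomial γ c)
    (hq : (P - MvPolynomial.homogeneousComponent p P).totalDegree = q) (hqp : q < p)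
    (r : Fin n → Fin n → F) :
    (MvPolynomial.aeval
        (fun i => MvPolynomial.aeval (fun j => Polynomial.C (r i j) * Polynomial.X) P) P).coeff
        (p * (p - 1) + q)
      = ∑ i, MvPolynomial.eval (r i) (MvPolynomial.homogeneousComponent q P) *
          MvPolynomial.eval
            (fun k => MvPolynomial.eval (r k) (MvPolynomial.homogeneousComponent p P))
            (MvPolynomial.pderiv i (MvPolynomial.homogeneousComponent p P)) := by
  classical
  rw [hPp] at hq ⊢
  set y : Fin n → Polynomial F :=
    fun i => MvPolynomial.aeval (fun j => Polynomial.C (r i j) * Polynomial.X) P with hy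
  set u : Fin n → F := fun i => MvPolynomial.eval (r i) (MvPolynomial.monomial γ c) with hu
  set v : Fin n → F := fun i => MvPolynomial.eval (r i) (MvPolynomial.homogeneousComponent q P)
    with hv
  set w : Fin n → Polynomial F := fun i => y i - Polynomial.C (u i) * Polynomial.X ^ p with hw
  -- coefficients of y
  have hyc : ∀ i k, (y i).coeff k
      = MvPolynomial.eval (r i) (MvPolynomial.homogeneousComponent k P) :=
    fun i k => coeff_aeval_scale P (r i) k
  have hhc0 : ∀ k, q < k → k ≠ p → MvPolynomial.homogeneousComponent k P = 0 := by
    intro k hk1 hk2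
    rcases lt_or_gt_of_ne hk2 with h | h
    · have hsplit : P = MvPolynomial.monomial γ c + (P - MvPolynomial.monomial γ c) := by ring
      rw [hsplit, map_add]
      have h1 : MvPolynomial.homogeneousComponent k
          (MvPolynomial.monomial γ c : MvPolynomial (Fin n) F) = 0 := by
        rw [MvPolynomial.homogeneousComponent_of_mem
          (MvPolynomial.isHomogeneous_monomial c (by rw [degree_eq_sum_univ, hγ]))]
        rw [if_neg hk2]
      have h2 : MvPolynomial.homogeneousComponent k (P - MvPolynomial.monomial γ c) = 0 := by
        apply MvPolynomial.homogeneousComponent_eq_zero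
        rw [hq]; omega
      rw [h1, h2, add_zero]
    · apply MvPolynomial.homogeneousComponent_eq_zero
      rw [hdeg]; omega
  have hyp : ∀ i, (y i).coeff p = u i := by
    intro i
    rw [hyc, hPp]
  have hyk : ∀ i k, q < k → k ≠ p → (y i).coeff k = 0 := by
    intro i k h1 h2
    rw [hyc, hhc0 k h1 h2, map_zero]
  have hwdeg : ∀ i, (w i).natDegree ≤ q := by
    intro i
    rw [Polynomial.natDegree_le_iff_coeff_eq_zero]
    intro k hk
    rw [hw]
    simp only [Polynomial.coeff_sub, Polynomial.coeff_C_mul, Polynomial.coeff_X_pow]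
    rcases eq_or_ne k p with rfl | hkp
    · rw [hyp, if_pos rfl, mul_one, sub_self]
    · rw [hyk i k hk hkp, if_neg hkp, mul_zero, sub_zero]
  have hwq : ∀ i, (w i).coeff q = v i := by
    intro i
    rw [hw]
    simp only [Polynomial.coeff_sub, Polynomial.coeff_C_mul, Polynomial.coeff_X_pow]
    rw [if_neg (by omega), mul_zero, sub_zero, hyc]
  have hysum : ∀ i, y i = Polynomial.C (u i) * Polynomial.X ^ p + w i := by
    intro i; rw [hw]; ring
  have hydeg : ∀ i, (y i).natDegree ≤ p := by
    intro i
    rw [Polynomial.natDegree_le_iff_coeff_eq_zero]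
    intro k hk
    exact hyk i k (by omega) (by omega)
  -- arithmetic
  have epp : p * p = p * (p - 1) + p := by
    calc p * p = p * ((p - 1) + 1) := by rw [Nat.sub_add_cancel (by omega)]
      _ = p * (p - 1) + p := by ring
  have hN : p * p - (p - q) = p * (p - 1) + q := by
    generalize p * (p - 1) = a at epp ⊢
    omega
  -- the remainder does not contribute
  have hRzero : (MvPolynomial.aeval y (P - MvPolynomial.monomial γ c)).coeff
      (p * (p - 1) + q) = 0 := by
    apply Polynomial.coeff_eq_zero_of_natDegree_lt
    refine lt_of_le_of_lt (natDegree_aeval_le (P - MvPolynomial.monomial γ c) y p hydeg) ?_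
    rw [hq]
    obtain ⟨d, rfl⟩ : ∃ d, p = q + d + 1 := ⟨p - q - 1, by omega⟩
    have h1 : q + d + 1 - 1 = q + d := by omega
    rw [h1]
    nlinarith
  -- shape of the main part
  have hshape := shapeP_prod hqp u w hwdeg (fun i => γ i) (Finset.univ : Finset (Fin n))
  have hsum : ∑ i, p * γ i = p * p := by
    rw [← Finset.mul_sum, hγ]
  rw [hsum] at hshape
  obtain ⟨_, _, _, hS, _, _⟩ := hshape
  have hppne : p * p ≠ 0 := by positivity
  have hcoeffS := hS hppne
  rw [hN] at hcoeffS
  -- assemble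
  have hcoeff : (MvPolynomial.aeval y P).coeff (p * (p - 1) + q)
      = (MvPolynomial.aeval y (MvPolynomial.monomial γ c : MvPolynomial (Fin n) F)).coeff
          (p * (p - 1) + q) := by
    have hsplit : P = MvPolynomial.monomial γ c + (P - MvPolynomial.monomial γ c) := by ring
    conv_lhs => rw [hsplit]
    rw [map_add, Polynomial.coeff_add, hRzero, add_zero]
  have hMval : MvPolynomial.aeval y (MvPolynomial.monomial γ c : MvPolynomial (Fin n) F)
      = Polynomial.C c * ∏ i, (Polynomial.C (u i) * Polynomial.X ^ p + w i) ^ γ i := by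
    rw [MvPolynomial.aeval_monomial, Polynomial.algebraMap_eq]
    congr 1
    rw [Finsupp.prod_pow]
    exact Finset.prod_congr rfl fun i _ => by rw [hysum]
  rw [hcoeff, hMval, Polynomial.coeff_C_mul, hcoeffS]
  -- finally compute the RHS
  rw [Finset.mul_sum]
  refine Finset.sum_congr rfl fun i _ => ?_
  rw [MvPolynomial.pderiv_monomial, MvPolynomial.eval_monomial]
  rw [Finsupp.prod_pow]
  have hsub : ∀ j, (γ - Finsupp.single i 1 : Fin n →₀ ℕ) j = if j = i then γ i - 1 else γ j := by
    intro j
    rw [Finsupp.tsub_apply]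
    rcases eq_or_ne j i with rfl | hj
    · rw [if_pos rfl, Finsupp.single_eq_same]
    · rw [if_neg hj, Finsupp.single_eq_of_ne hj, Nat.sub_zero]
  have hprod : (∏ j, u j ^ ((γ - Finsupp.single i 1 : Fin n →₀ ℕ) j))
      = u i ^ (γ i - 1) * ∏ j ∈ Finset.univ.erase i, u j ^ γ j := by
    rw [← Finset.mul_prod_erase Finset.univ _ (Finset.mem_univ i)]
    congr 1
    · rw [hsub i, if_pos rfl]
    · exact Finset.prod_congr rfl fun j hj => by
        rw [hsub j, if_neg (Finset.ne_of_mem_erase hj)]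
  rw [hprod, hwq]
  push_cast
  ring

end Main

end BisymHelpers

/-- A function `f : S^n → S` is bisymmetric if for every `n × n` matrix `X` over `S`,
applying `f` to the rows and then to the results equals applying `f` to the columns
and then to the results. -/
def Bisym {S : Type*} {n : ℕ} (f : (Fin n → S) → S) : Prop :=
  ∀ X : Fin n → Fin n → S,
    f (fun i => f (X i)) = f (fun j => f (fun i => X i j))

/-- The equation satisfied by `P_q`, the top homogeneous component of `P − P_p`. -/
theorem bisym_Pq_equation
    {K : Type*} [Field K] [CharZero K] {n p q : ℕ}
    (P : MvPolynomial (Fin n) K)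
    (hbi : Bisym fun x : Fin n → K => MvPolynomial.eval x P)
    (hdeg : P.totalDegree = p) (hp : 2 ≤ p)
    (c : K) (hc : c ≠ 0) (γ : Fin n →₀ ℕ) (hγ : ∑ i, γ i = p)
    (hPp : MvPolynomial.homogeneousComponent p P = MvPolynomial.monomial γ c)
    (hne : P ≠ MvPolynomial.homogeneousComponent p P)
    (hq : (P - MvPolynomial.homogeneousComponent p P).totalDegree = q) (hqp : q < p) :
    ∀ X : Fin n → Fin n → K,
      (∑ i, MvPolynomial.eval (X i) (MvPolynomial.homogeneousComponent q P) *
        MvPolynomial.eval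
          (fun k => MvPolynomial.eval (X k) (MvPolynomial.homogeneousComponent p P))
          (MvPolynomial.pderiv i (MvPolynomial.homogeneousComponent p P))) =
      (∑ i, MvPolynomial.eval (fun l => X l i) (MvPolynomial.homogeneousComponent q P) *
        MvPolynomial.eval
          (fun k => MvPolynomial.eval (fun l => X l k)
            (MvPolynomial.homogeneousComponent p P))
          (MvPolynomial.pderiv i (MvPolynomial.homogeneousComponent p P))) := by
  intro X
  have h1 := key_coeff P hdeg hp c γ hγ hPp hq hqp X
  have h2 := key_coeff P hdeg hp c γ hγ hPp hq hqp (fun i j => X j i)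
  rw [← h1, ← h2]
  have hpoly :
      (MvPolynomial.aeval
        (fun i => MvPolynomial.aeval (fun j => Polynomial.C (X i j) * Polynomial.X) P) P)
      = (MvPolynomial.aeval
        (fun i => MvPolynomial.aeval (fun j => Polynomial.C (X j i) * Polynomial.X) P) P) := by
    apply Polynomial.funext
    intro t
    have hev : ∀ (x : Fin n → K),
        (MvPolynomial.aeval (fun j => Polynomial.C (x j) * Polynomial.X) P).eval t
          = MvPolynomial.eval (fun j => x j * t) P := by
      intro x
      rw [eval_aeval_poly]
      simp
    rw [eval_aeval_poly, eval_aeval_poly]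
    simp only [hev]
    exact hbi (fun i j => X i j * t)
  rw [hpoly]
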